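/- Let B be a Boolean algebra and X_B its Stone space. For each a ∈ B the set â := {f ∈ X_B | f a = true} is clopen in X_B, and the map η_B : B → Clopens(X_B), a ↦ â, is an isomorphism of Boolean algebras (it is bijective and satisfies η_B(⊥) = ∅, η_B(⊤) = X_B, η_B(a ⊓ b) = η_B(a) ∩ η_B(b), η_B(a ⊔ b) = η_B(a) ∪ η_B(b), and η_B(aᶜ) = X_B \ η_B(a)). -/
import Mathlib

/-- The defining conditions for a point of the Stone space of a Boolean algebra `B`. -/
def IsStonePoint {B : Type*} [BooleanAlgebra B] (f : B → Bool) : Prop :=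
  f ⊥ = false ∧ f ⊤ = true ∧ (∀ a b : B, f (a ⊓ b) = (f a && f b)) ∧
    (∀ a b : B, f (a ⊔ b) = (f a || f b))

/-- The Stone space of a Boolean algebra `B`, as a subspace of the product
`B → Bool` with `Bool` discrete. -/
def StoneSpace (B : Type*) [BooleanAlgebra B] : Type _ :=
  {f : B → Bool // IsStonePoint f}

instance (B : Type*) [BooleanAlgebra B] : TopologicalSpace (StoneSpace B) :=
  instTopologicalSpaceSubtype

section Aux

variable {B : Type*} [BooleanAlgebra B] {f : B → Bool}

lemma sp_compl (hf : IsStonePoint f) (a : B) : f aᶜ = !f a := by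
  have h1 : (f a && f aᶜ) = false := by
    rw [← hf.2.2.1]; simp [hf.1]
  have h2 : (f a || f aᶜ) = true := by
    rw [← hf.2.2.2]; simp [hf.2.1]
  cases h : f a <;> simp [h] at h1 h2 <;> simp [h1, h2]

lemma sp_mono (hf : IsStonePoint f) {a b : B} (hab : a ≤ b) (ha : f a = true) :
    f b = true := by
  have : a ⊓ b = a := inf_eq_left.2 hab
  have h := hf.2.2.1 a b
  rw [this, ha] at h
  exact (Bool.and_eq_true _ _ ▸ h.symm).2

lemma sp_inf_finset (hf : IsStonePoint f) {ι : Type*} (t : Finset ι) (g : ι → B) :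
    f (t.inf g) = true ↔ ∀ i ∈ t, f (g i) = true := by
  induction t using Finset.cons_induction with
  | empty => simp [hf.2.1]
  | cons i t hi ih =>
    rw [Finset.inf_cons, hf.2.2.1]
    simp [ih]

lemma sp_sup_finset (hf : IsStonePoint f) {ι : Type*} (t : Finset ι) (g : ι → B) :
    f (t.sup g) = true ↔ ∃ i ∈ t, f (g i) = true := by
  induction t using Finset.cons_induction with
  | empty => simp [hf.1]
  | cons i t hi ih =>
    rw [Finset.sup_cons, hf.2.2.2]
    simp [ih]

/-- Boolean prime ideal theorem: every nonzero element is mapped to `true`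
by some Stone point. -/
lemma exists_stone_point {c : B} (hc : c ≠ ⊥) :
    ∃ f : B → Bool, IsStonePoint f ∧ f c = true := by
  classical
  -- the collection of proper filters containing c
  set P : Set (Set B) := {F | c ∈ F ∧ (⊥ : B) ∉ F ∧
    (∀ x ∈ F, ∀ y ∈ F, x ⊓ y ∈ F) ∧ (∀ x ∈ F, ∀ y : B, x ≤ y → y ∈ F)} with hP
  have hbase : {x : B | c ≤ x} ∈ P := by
    refine ⟨le_refl c, fun h => hc (le_bot_iff.1 h), ?_, ?_⟩
    · exact fun x hx y hy => le_inf hx hy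
    · exact fun x hx y hxy => le_trans hx hxy
  have hchain : ∀ ch ⊆ P, IsChain (· ⊆ ·) ch → ch.Nonempty →
      ∃ ub ∈ P, ∀ F ∈ ch, F ⊆ ub := by
    intro ch hch hchain hne
    refine ⟨⋃₀ ch, ?_, fun F hF => Set.subset_sUnion_of_mem hF⟩
    obtain ⟨F0, hF0⟩ := hne
    refine ⟨Set.mem_sUnion.2 ⟨F0, hF0, (hch hF0).1⟩, ?_, ?_, ?_⟩
    · rintro ⟨F, hF, hbot⟩
      exact (hch hF).2.1 hbot
    · rintro x ⟨F1, hF1, hx⟩ y ⟨F2, hF2, hy⟩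
      rcases hchain.total hF1 hF2 with h | h
      · exact ⟨F2, hF2, (hch hF2).2.2.1 x (h hx) y hy⟩
      · exact ⟨F1, hF1, (hch hF1).2.2.1 x hx y (h hy)⟩
    · rintro x ⟨F, hF, hx⟩ y hxy
      exact ⟨F, hF, (hch hF).2.2.2 x hx y hxy⟩
  obtain ⟨M, -, hMax⟩ := zorn_subset_nonempty P hchain _ hbase
  have hM : M ∈ P := hMax.1
  -- M is an ultrafilter
  have hultra : ∀ a : B, a ∈ M ∨ aᶜ ∈ M := by
    intro a
    by_contra h
    push_neg at h
    obtain ⟨ha, hac⟩ := h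
    set M' : Set B := {x | ∃ y ∈ M, y ⊓ a ≤ x} with hM'
    have hMM' : M ⊆ M' := fun x hx => ⟨x, hx, inf_le_left⟩
    have hM'P : M' ∈ P := by
      refine ⟨hMM' hM.1, ?_, ?_, ?_⟩
      · rintro ⟨y, hy, hle⟩
        have : y ≤ aᶜ := le_compl_iff_disjoint_right.2 (disjoint_iff.2 (le_bot_iff.1 hle))
        exact hac (hM.2.2.2 y hy aᶜ this)
      · rintro x ⟨y1, hy1, h1⟩ z ⟨y2, hy2, h2⟩
        refine ⟨y1 ⊓ y2, hM.2.2.1 y1 hy1 y2 hy2, le_inf ?_ ?_⟩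
        · exact le_trans (inf_le_inf_right a inf_le_left) h1
        · exact le_trans (inf_le_inf_right a inf_le_right) h2
      · rintro x ⟨y, hy, h1⟩ z hxz
        exact ⟨y, hy, le_trans h1 hxz⟩
    have hsub : M' ⊆ M := hMax.2 hM'P hMM'
    exact ha (hsub ⟨⊤, hM.2.2.2 c hM.1 ⊤ le_top, by simp⟩)
  refine ⟨fun x => decide (x ∈ M), ⟨?_, ?_, ?_, ?_⟩, by simp [hM.1]⟩
  · simp [hM.2.1]
  · simp [hM.2.2.2 c hM.1 ⊤ le_top]
  · intro a b
    rw [← Bool.decide_and, decide_eq_decide]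
    constructor
    · intro h
      exact ⟨hM.2.2.2 _ h a inf_le_left, hM.2.2.2 _ h b inf_le_right⟩
    · rintro ⟨h1, h2⟩
      exact hM.2.2.1 a h1 b h2
  · intro a b
    rw [← Bool.decide_or, decide_eq_decide]
    constructor
    · intro h
      by_contra hcon
      push_neg at hcon
      obtain ⟨h1, h2⟩ := hcon
      have h1c : aᶜ ∈ M := (hultra a).resolve_left h1
      have h2c : bᶜ ∈ M := (hultra b).resolve_left h2
      have : (a ⊔ b) ⊓ (aᶜ ⊓ bᶜ) ∈ M :=
        hM.2.2.1 _ h _ (hM.2.2.1 _ h1c _ h2c)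
      rw [← compl_sup, inf_compl_eq_bot] at this
      exact hM.2.1 this
    · rintro (h | h)
      · exact hM.2.2.2 a h _ le_sup_left
      · exact hM.2.2.2 b h _ le_sup_right

lemma stone_sep {a b : B} (h : ¬ a ≤ b) :
    ∃ f : B → Bool, IsStonePoint f ∧ f a = true ∧ f b = false := by
  have hc : a ⊓ bᶜ ≠ ⊥ := by
    rw [← sdiff_eq]
    intro hbot
    exact h (sdiff_eq_bot_iff.1 hbot)
  obtain ⟨f, hf, hfc⟩ := exists_stone_point hc
  have ha : f a = true := sp_mono hf inf_le_left hfc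
  have hbc : f bᶜ = true := sp_mono hf inf_le_right hfc
  rw [sp_compl hf] at hbc
  exact ⟨f, hf, ha, by simpa using hbc⟩

lemma stoneSet_closed : IsClosed {f : B → Bool | IsStonePoint f} := by
  have h1 : IsClosed {f : B → Bool | f ⊥ = false} :=
    isClosed_eq (continuous_apply _) continuous_const
  have h2 : IsClosed {f : B → Bool | f ⊤ = true} :=
    isClosed_eq (continuous_apply _) continuous_const
  have h3 : ∀ a b : B, IsClosed {f : B → Bool | f (a ⊓ b) = (f a && f b)} := by
    intro a b
    exact isClosed_eq (continuous_apply _) (by fun_prop)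
  have h4 : ∀ a b : B, IsClosed {f : B → Bool | f (a ⊔ b) = (f a || f b)} := by
    intro a b
    exact isClosed_eq (continuous_apply _) (by fun_prop)
  have : {f : B → Bool | IsStonePoint f} =
      {f | f ⊥ = false} ∩ ({f | f ⊤ = true} ∩
        ((⋂ a, ⋂ b, {f | f (a ⊓ b) = (f a && f b)}) ∩
          ⋂ a, ⋂ b, {f | f (a ⊔ b) = (f a || f b)})) := by
    ext f
    simp only [IsStonePoint, Set.mem_setOf_eq, Set.mem_inter_iff, Set.mem_iInter]
  rw [this]
  exact h1.inter (h2.inter ((isClosed_iInter fun a => isClosed_iInter fun b =>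
    h3 a b).inter (isClosed_iInter fun a => isClosed_iInter fun b => h4 a b)))

instance : CompactSpace (StoneSpace B) :=
  isCompact_iff_compactSpace.mp stoneSet_closed.isCompact

lemma V_clopen (a : B) : IsClopen {f : StoneSpace B | f.1 a = true} := by
  have hcont : Continuous fun f : StoneSpace B => f.1 a :=
    (continuous_apply a).comp continuous_subtype_val
  exact (isClopen_discrete {true}).preimage hcont

lemma V_basis {U : Set (StoneSpace B)} (hU : IsOpen U) {f : StoneSpace B} (hf : f ∈ U) :
    ∃ a : B, f.1 a = true ∧ {g : StoneSpace B | g.1 a = true} ⊆ U := by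
  obtain ⟨W, hW, rfl⟩ := isOpen_induced_iff.1 hU
  obtain ⟨I, u, hu, hsub⟩ := isOpen_pi_iff.1 hW f.1 hf
  classical
  refine ⟨I.inf (fun b => if f.1 b = true then b else bᶜ), ?_, ?_⟩
  · rw [sp_inf_finset f.2]
    intro i _
    cases h : f.1 i
    · simp only [h, Bool.false_eq_true, if_false]
      rw [sp_compl f.2, h]
      rfl
    · simp [h]
  · intro g hg
    apply hsub
    intro i hi
    rw [Set.mem_setOf_eq, sp_inf_finset g.2] at hg
    have hgi := hg i hi
    cases h : f.1 i
    · simp only [h, Bool.false_eq_true, if_false] at hgi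
      rw [sp_compl g.2] at hgi
      have : g.1 i = false := by
        cases hgi' : g.1 i
        · rfl
        · rw [hgi'] at hgi; simp at hgi
      rw [show g.1 i = f.1 i from by rw [this, h]]
      exact (hu i hi).2
    · simp only [h, if_true] at hgi
      rw [show g.1 i = f.1 i from by rw [hgi, h]]
      exact (hu i hi).2

lemma stone_le {a b : B}
    (h : {f : StoneSpace B | f.1 a = true} ⊆ {f : StoneSpace B | f.1 b = true}) :
    a ≤ b := by
  by_contra hab
  obtain ⟨f, hf, ha, hb⟩ := stone_sep hab
  have := h (show (⟨f, hf⟩ : StoneSpace B) ∈ {g : StoneSpace B | g.1 a = true} from ha)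
  have h2 : f b = true := this
  rw [hb] at h2
  exact Bool.false_ne_true h2

end Aux

open TopologicalSpace in
/-- Stone's representation theorem: for every `a ∈ B`, the set
`â = {f ∈ X_B | f a = true}` is clopen, and `a ↦ â` is an isomorphism of Boolean
algebras from `B` onto the clopen subsets of the Stone space `X_B`. -/
theorem stone_representation (B : Type*) [BooleanAlgebra B] :
    (∀ a : B, IsClopen {f : StoneSpace B | f.1 a = true}) ∧
    ∃ η : B → Clopens (StoneSpace B),
      (∀ a : B, (η a : Set (StoneSpace B)) = {f : StoneSpace B | f.1 a = true}) ∧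
      Function.Bijective η ∧
      (η ⊥ : Set (StoneSpace B)) = ∅ ∧
      (η ⊤ : Set (StoneSpace B)) = Set.univ ∧
      (∀ a b : B, (η (a ⊓ b) : Set (StoneSpace B)) = (η a : Set (StoneSpace B)) ∩ (η b : Set (StoneSpace B))) ∧
      (∀ a b : B, (η (a ⊔ b) : Set (StoneSpace B)) = (η a : Set (StoneSpace B)) ∪ (η b : Set (StoneSpace B))) ∧
      (∀ a : B, (η aᶜ : Set (StoneSpace B)) = Set.univ \ (η a : Set (StoneSpace B))) := by
  refine ⟨V_clopen, ⟨fun a => ⟨_, V_clopen a⟩, fun a => rfl, ⟨?inj, ?surj⟩, ?_, ?_, ?_, ?_, ?_⟩⟩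
  case inj =>
    intro a b hab
    have hsets : {f : StoneSpace B | f.1 a = true} = {f : StoneSpace B | f.1 b = true} := by
      have := congrArg (fun K : Clopens (StoneSpace B) => (K : Set (StoneSpace B))) hab
      simpa using this
    exact le_antisymm (stone_le hsets.le) (stone_le hsets.ge)
  case surj =>
    intro K
    classical
    have hcov : ∀ f : StoneSpace B, f ∈ (K : Set (StoneSpace B)) →
        ∃ a : B, f.1 a = true ∧ {g : StoneSpace B | g.1 a = true} ⊆ (K : Set (StoneSpace B)) :=
      fun f hf => V_basis K.2.2 hf
    choose a ha hsub using hcov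
    have hKcompact : IsCompact (K : Set (StoneSpace B)) := K.2.1.isCompact
    have hcover : (K : Set (StoneSpace B)) ⊆
        ⋃ f : (K : Set (StoneSpace B)), {g : StoneSpace B | g.1 (a f f.2) = true} := by
      intro f hf
      exact Set.mem_iUnion.2 ⟨⟨f, hf⟩, ha f hf⟩
    obtain ⟨t, ht⟩ := hKcompact.elim_finite_subcover
      (fun f : (K : Set (StoneSpace B)) => {g : StoneSpace B | g.1 (a f f.2) = true})
      (fun f => (V_clopen _).2) hcover
    refine ⟨t.sup (fun f => a f f.2), ?_⟩
    apply SetLike.coe_injective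
    show {g : StoneSpace B | g.1 (t.sup fun f => a f f.2) = true} = (K : Set (StoneSpace B))
    ext g
    simp only [Set.mem_setOf_eq]
    rw [sp_sup_finset g.2]
    constructor
    · rintro ⟨f, hft, hgf⟩
      exact hsub f f.2 hgf
    · intro hg
      obtain ⟨f, hft, hgf⟩ := Set.mem_iUnion₂.1 (ht hg)
      exact ⟨f, hft, hgf⟩
  · ext f; simp [f.2.1]
  · ext f; simp [f.2.2.1]
  · intro a b; ext f; simp [f.2.2.2.1 a b]
  · intro a b; ext f; simp [f.2.2.2.2 a b]
  · intro a; ext f; simp [sp_compl f.2 a]
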